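/- Let A ∈ ℝ^{d×d} be symmetric, B ∈ ℝ^{k×d}, and η_x, η, c > 0 with η < c. Define the block matrix J_AL = [[I - η_x(A + c BᵀB), -η_x Bᵀ], [η B(I - η_x(A + c BᵀB)), I - η_x η B Bᵀ]]. Then J_AL is similar to J' = [[I - η_x A - η_x(c+η)BᵀB, -η_x Bᵀ], [η B, I]], via the invertible transformation P = [[I, 0], [-η B, I]], i.e., J_AL = P⁻¹ J' P. -/
import Mathlib


open Matrix

theorem stmt_7 (d k : ℕ) (A : Matrix (Fin d) (Fin d) ℝ) (hA : A.IsSymm)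
    (B : Matrix (Fin k) (Fin d) ℝ) (ηx η c : ℝ)
    (hηx : 0 < ηx) (hη : 0 < η) (hc : 0 < c) (hηc : η < c) :
    IsUnit (Matrix.fromBlocks (1 : Matrix (Fin d) (Fin d) ℝ) 0
        (-(η • B)) (1 : Matrix (Fin k) (Fin k) ℝ)) ∧
    Matrix.fromBlocks
        (1 - ηx • (A + c • (Bᵀ * B))) (-(ηx • Bᵀ))
        (η • (B * (1 - ηx • (A + c • (Bᵀ * B))))) (1 - (ηx * η) • (B * Bᵀ)) =
      (Matrix.fromBlocks (1 : Matrix (Fin d) (Fin d) ℝ) 0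
          (-(η • B)) (1 : Matrix (Fin k) (Fin k) ℝ))⁻¹ *
        Matrix.fromBlocks
          (1 - ηx • A - (ηx * (c + η)) • (Bᵀ * B)) (-(ηx • Bᵀ))
          (η • B) (1 : Matrix (Fin k) (Fin k) ℝ) *
        Matrix.fromBlocks (1 : Matrix (Fin d) (Fin d) ℝ) 0
          (-(η • B)) (1 : Matrix (Fin k) (Fin k) ℝ) := by
  set P := Matrix.fromBlocks (1 : Matrix (Fin d) (Fin d) ℝ) 0
      (-(η • B)) (1 : Matrix (Fin k) (Fin k) ℝ) with hP
  set Q := Matrix.fromBlocks (1 : Matrix (Fin d) (Fin d) ℝ) 0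
      (η • B) (1 : Matrix (Fin k) (Fin k) ℝ) with hQ
  have hQP : Q * P = 1 := by
    rw [hP, hQ, Matrix.fromBlocks_multiply]
    simp [← Matrix.fromBlocks_one]
  have hPQ : P * Q = 1 := by
    rw [hP, hQ, Matrix.fromBlocks_multiply]
    simp [← Matrix.fromBlocks_one]
  have hU : IsUnit P := ⟨⟨P, Q, hPQ, hQP⟩, rfl⟩
  refine ⟨hU, ?_⟩
  have hinv : P⁻¹ = Q := Matrix.inv_eq_left_inv hQP
  rw [hinv, hQ, Matrix.fromBlocks_multiply, Matrix.fromBlocks_multiply]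
  refine Matrix.fromBlocks_inj.mpr ⟨?_, ?_, ?_, ?_⟩ <;>
  · simp only [Matrix.mul_smul, Matrix.smul_mul, Matrix.mul_sub, Matrix.sub_mul,
      Matrix.mul_add, Matrix.add_mul, smul_smul, smul_sub, smul_add, mul_add, add_mul,
      Matrix.mul_assoc, sub_mul, neg_mul, mul_neg, Matrix.mul_one, Matrix.one_mul,
      mul_one, one_mul, Matrix.neg_mul, Matrix.mul_neg, smul_neg, neg_smul,
      Matrix.mul_zero, Matrix.zero_mul, mul_zero, zero_mul]
    module
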